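/- In a purple-edge-minimal pair of labellings with purple edge uv of graphs G_1, G_2 on [n] with n ≥ (Δ_1+1)(Δ_2+1) - 1 and Δ_1, Δ_2 ≥ 2, we have |A*(u)| ≥ Δ_1 - 1 and |B*(u)| ≥ Δ_2 - 1; in particular both sets are nonempty. -/

import Mathlib

def pcount {n : ℕ} (G1 G2 : SimpleGraph (Fin n))
    [DecidableRel G1.Adj] [DecidableRel G2.Adj] (τ : Equiv.Perm (Fin n)) : ℕ :=
  (Finset.univ.filter fun p : Fin n × Fin n =>
    G1.Adj p.1 p.2 ∧ G2.Adj (τ p.1) (τ p.2)).card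

/-- Claim 3: `|A*(u)| ≥ Δ₁ - 1`, `|B*(u)| ≥ Δ₂ - 1`; in particular both sets
are nonempty. -/
theorem stmt_7 {n : ℕ} (G1 G2 : SimpleGraph (Fin n))
    [DecidableRel G1.Adj] [DecidableRel G2.Adj]
    (hn : (G1.maxDegree + 1) * (G2.maxDegree + 1) ≤ n + 1)
    (hΔ12 : G2.maxDegree ≤ G1.maxDegree) (hΔ2 : 2 ≤ G2.maxDegree)
    (hmin : ∀ τ : Equiv.Perm (Fin n), pcount G1 G2 1 ≤ pcount G1 G2 τ)
    (u v : Fin n) (hp : G1.Adj u v ∧ G2.Adj u v) :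
    G1.maxDegree - 1 ≤ (((G1.neighborFinset u).biUnion (fun x => G2.neighborFinset x)) \
        (G2.neighborFinset u ∪ (G2.neighborFinset u).biUnion (fun x => G1.neighborFinset x))).card ∧
    G2.maxDegree - 1 ≤ (((G2.neighborFinset u).biUnion (fun x => G1.neighborFinset x)) \
        (G1.neighborFinset u ∪ (G1.neighborFinset u).biUnion (fun x => G2.neighborFinset x))).card ∧
    (((G1.neighborFinset u).biUnion (fun x => G2.neighborFinset x)) \
        (G2.neighborFinset u ∪ (G2.neighborFinset u).biUnion (fun x => G1.neighborFinset x))).Nonempty ∧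
    (((G2.neighborFinset u).biUnion (fun x => G1.neighborFinset x)) \
        (G1.neighborFinset u ∪ (G1.neighborFinset u).biUnion (fun x => G2.neighborFinset x))).Nonempty := by
  obtain ⟨h1a, h2a⟩ := hp
  have hvu : v ≠ u := fun h => G1.irrefl (h ▸ h1a)
  -- Link lemma from minimality
  have hlink : ∀ w : Fin n, w ≠ u → w ≠ v →
      (∃ x, G1.Adj u x ∧ G2.Adj x w) ∨ (∃ x, G2.Adj u x ∧ G1.Adj x w) := by
    intro w hwu hwv
    by_contra hc
    push_neg at hc
    obtain ⟨hc1, hc2⟩ := hc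
    set σ := Equiv.swap u w with hσ
    have hlt : pcount G1 G2 σ < pcount G1 G2 1 := by
      unfold pcount
      apply Finset.card_lt_card
      constructor
      · intro p hpmem
        rw [Finset.mem_filter] at hpmem ⊢
        simp only [Finset.mem_filter, Finset.mem_univ, true_and,
          Equiv.Perm.one_apply] at hpmem ⊢
        obtain ⟨hg1, hg2⟩ := hpmem
        refine ⟨hg1, ?_⟩
        obtain ⟨a, b⟩ := p
        simp only at hg1 hg2 ⊢
        by_cases hau : a = u <;> by_cases haw : a = w <;>
          by_cases hbu : b = u <;> by_cases hbw : b = w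
        all_goals try (exfalso; subst_vars; first | exact hwu rfl | exact hwu rfl.symm | exact G1.irrefl hg1)
        · subst hau hbw
          rw [Equiv.swap_apply_left, Equiv.swap_apply_right] at hg2
          exact hg2.symm
        · subst hau
          rw [Equiv.swap_apply_left, Equiv.swap_apply_of_ne_of_ne hbu hbw] at hg2
          exact absurd hg2.symm (hc1 b hg1)
        · subst haw hbu
          rw [Equiv.swap_apply_right, Equiv.swap_apply_left] at hg2
          exact hg2.symm
        · subst haw
          rw [Equiv.swap_apply_right, Equiv.swap_apply_of_ne_of_ne hbu hbw] at hg2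
          exact absurd hg1.symm (hc2 b hg2)
        · subst hbu
          rw [Equiv.swap_apply_left, Equiv.swap_apply_of_ne_of_ne hau haw] at hg2
          exact absurd hg2 (hc1 a hg1.symm)
        · subst hbw
          rw [Equiv.swap_apply_right, Equiv.swap_apply_of_ne_of_ne hau haw] at hg2
          exact absurd hg1 (hc2 a hg2.symm)
        · rw [Equiv.swap_apply_of_ne_of_ne hau haw,
            Equiv.swap_apply_of_ne_of_ne hbu hbw] at hg2
          exact hg2
      · intro hsub'
        have hmemuv : ((u, v) : Fin n × Fin n) ∈
            Finset.univ.filter fun p : Fin n × Fin n =>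
              G1.Adj p.1 p.2 ∧ G2.Adj ((1 : Equiv.Perm (Fin n)) p.1)
                ((1 : Equiv.Perm (Fin n)) p.2) := by
          exact Finset.mem_filter.2 ⟨Finset.mem_univ _, h1a, h2a⟩
        have := hsub' hmemuv
        simp only [Finset.mem_filter, Finset.mem_univ, true_and] at this
        rw [hσ, Equiv.swap_apply_left,
          Equiv.swap_apply_of_ne_of_ne hvu (Ne.symm hwv)] at this
        exact hc1 v h1a this.2.symm
    exact absurd (hmin σ) (Nat.not_le.2 hlt)
  -- Sets
  set N1u := G1.neighborFinset u with hN1u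
  set N2u := G2.neighborFinset u with hN2u
  set A := N1u.biUnion (fun x => G2.neighborFinset x) with hA
  set B := N2u.biUnion (fun x => G1.neighborFinset x) with hB
  have hcov : ∀ w : Fin n, w ≠ v → w ∈ A ∪ B := by
    intro w hwv
    by_cases hwu : w = u
    · subst hwu
      exact Finset.mem_union_left _ (Finset.mem_biUnion.2
        ⟨v, (SimpleGraph.mem_neighborFinset _ _ _).2 h1a,
          (SimpleGraph.mem_neighborFinset _ _ _).2 h2a.symm⟩)
    · rcases hlink w hwu hwv with ⟨x, hx1, hx2⟩ | ⟨x, hx1, hx2⟩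
      · exact Finset.mem_union_left _ (Finset.mem_biUnion.2
          ⟨x, (SimpleGraph.mem_neighborFinset _ _ _).2 hx1,
            (SimpleGraph.mem_neighborFinset _ _ _).2 hx2⟩)
      · exact Finset.mem_union_right _ (Finset.mem_biUnion.2
          ⟨x, (SimpleGraph.mem_neighborFinset _ _ _).2 hx1,
            (SimpleGraph.mem_neighborFinset _ _ _).2 hx2⟩)
  have hcard1 : n - 1 ≤ (A ∪ B).card := by
    have hsub2 : Finset.univ \ {v} ⊆ A ∪ B := by
      intro w hw
      rw [Finset.mem_sdiff, Finset.mem_singleton] at hw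
      exact hcov w hw.2
    have := Finset.card_le_card hsub2
    rwa [Finset.card_sdiff_of_subset (Finset.subset_univ _), Finset.card_singleton,
      Finset.card_univ, Fintype.card_fin] at this
  -- degree bounds
  have hdN1u : N1u.card ≤ G1.maxDegree := by
    rw [hN1u, SimpleGraph.card_neighborFinset_eq_degree]
    exact G1.degree_le_maxDegree u
  have hdN2u : N2u.card ≤ G2.maxDegree := by
    rw [hN2u, SimpleGraph.card_neighborFinset_eq_degree]
    exact G2.degree_le_maxDegree u
  have hcA : A.card ≤ G1.maxDegree * G2.maxDegree := by
    calc A.card ≤ ∑ x ∈ N1u, (G2.neighborFinset x).card := Finset.card_biUnion_le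
      _ ≤ ∑ _x ∈ N1u, G2.maxDegree := Finset.sum_le_sum fun x _ => by
          rw [SimpleGraph.card_neighborFinset_eq_degree]
          exact G2.degree_le_maxDegree x
      _ = N1u.card * G2.maxDegree := by rw [Finset.sum_const, smul_eq_mul]
      _ ≤ G1.maxDegree * G2.maxDegree := Nat.mul_le_mul_right _ hdN1u
  have hcB : B.card ≤ G1.maxDegree * G2.maxDegree := by
    calc B.card ≤ ∑ x ∈ N2u, (G1.neighborFinset x).card := Finset.card_biUnion_le
      _ ≤ ∑ _x ∈ N2u, G1.maxDegree := Finset.sum_le_sum fun x _ => by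
          rw [SimpleGraph.card_neighborFinset_eq_degree]
          exact G1.degree_le_maxDegree x
      _ = N2u.card * G1.maxDegree := by rw [Finset.sum_const, smul_eq_mul]
      _ ≤ G2.maxDegree * G1.maxDegree := Nat.mul_le_mul_right _ hdN2u
      _ = G1.maxDegree * G2.maxDegree := Nat.mul_comm _ _
  -- decomposition bounds
  have hdec1 : (A ∪ B).card ≤ (A \ (N2u ∪ B)).card + (N2u.card + B.card) := by
    calc (A ∪ B).card ≤ ((A \ (N2u ∪ B)) ∪ (N2u ∪ B)).card := by
          apply Finset.card_le_card
          intro x hx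
          by_cases hx2 : x ∈ N2u ∪ B
          · exact Finset.mem_union_right _ hx2
          · rcases Finset.mem_union.1 hx with h | h
            · exact Finset.mem_union_left _ (Finset.mem_sdiff.2 ⟨h, hx2⟩)
            · exact absurd (Finset.mem_union_right _ h) hx2
      _ ≤ (A \ (N2u ∪ B)).card + (N2u ∪ B).card := Finset.card_union_le _ _
      _ ≤ (A \ (N2u ∪ B)).card + (N2u.card + B.card) :=
          Nat.add_le_add_left (Finset.card_union_le _ _) _
  have hdec2 : (A ∪ B).card ≤ (B \ (N1u ∪ A)).card + (N1u.card + A.card) := by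
    calc (A ∪ B).card ≤ ((B \ (N1u ∪ A)) ∪ (N1u ∪ A)).card := by
          apply Finset.card_le_card
          intro x hx
          by_cases hx2 : x ∈ N1u ∪ A
          · exact Finset.mem_union_right _ hx2
          · rcases Finset.mem_union.1 hx with h | h
            · exact absurd (Finset.mem_union_right _ h) hx2
            · exact Finset.mem_union_left _ (Finset.mem_sdiff.2 ⟨h, hx2⟩)
      _ ≤ (B \ (N1u ∪ A)).card + (N1u ∪ A).card := Finset.card_union_le _ _
      _ ≤ (B \ (N1u ∪ A)).card + (N1u.card + A.card) :=
          Nat.add_le_add_left (Finset.card_union_le _ _) _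
  have hn' : G1.maxDegree * G2.maxDegree + G1.maxDegree + G2.maxDegree + 1 ≤ n + 1 := by
    calc G1.maxDegree * G2.maxDegree + G1.maxDegree + G2.maxDegree + 1
        = (G1.maxDegree + 1) * (G2.maxDegree + 1) := by ring
      _ ≤ n + 1 := hn
  have hAstar : G1.maxDegree - 1 ≤ (A \ (N2u ∪ B)).card := by
    have := hcB
    omega
  have hBstar : G2.maxDegree - 1 ≤ (B \ (N1u ∪ A)).card := by
    have := hcA
    omega
  refine ⟨hAstar, hBstar, ?_, ?_⟩
  · rw [← Finset.card_pos]
    omega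
  · rw [← Finset.card_pos]
    omega
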